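/- Let w be a weight degree function on ℂ[x,y] with w(x) = α, w(y) = β. Let p, q ∈ ℂ[x,y] be nonzero w-homogeneous polynomials with deg_w(p) ≠ 0 and J(p,q) = 0. Then q is proportional to a rational power of p: there exist an integer s ≥ 1, an integer t ≥ 0 and a constant c ∈ ℂ* such that q^s = c·p^t. -/

import Mathlib

open MvPolynomial

namespace HomJacAux

noncomputable section

abbrev P2 := MvPolynomial (Fin 2) ℂ

lemma coeff_pderiv (i : Fin 2) (f : P2) (m : Fin 2 →₀ ℕ) :
    coeff m (pderiv i f) = ((m i : ℂ) + 1) * coeff (m + Finsupp.single i 1) f := by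
  induction f using MvPolynomial.induction_on' with
  | monomial u a =>
    rw [pderiv_monomial]
    by_cases h : u = m + Finsupp.single i 1
    · subst h
      rw [coeff_monomial, coeff_monomial, if_pos (add_tsub_cancel_right _ _), if_pos rfl]
      push_cast [Finsupp.add_apply, Finsupp.single_eq_same]
      ring
    · rw [coeff_monomial, coeff_monomial, if_neg h, mul_zero]
      by_cases hu : Finsupp.single i 1 ≤ u
      · rw [if_neg]
        intro hc
        exact h (by rw [← hc, tsub_add_cancel_of_le hu])
      · have h0 : u i = 0 := by
          by_contra h0
          exact hu (Finsupp.single_le_iff.mpr (Nat.one_le_iff_ne_zero.mpr h0))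
        rw [h0]
        simp
  | add p q hp hq => simp [coeff_add, hp, hq, mul_add]

lemma eq_C_of_pderiv_eq_zero {f : P2} (h0 : pderiv 0 f = 0) (h1 : pderiv 1 f = 0) :
    f = C (coeff 0 f) := by
  ext m
  rw [coeff_C]
  by_cases hm : 0 = m
  · rw [if_pos hm, ← hm]
  · rw [if_neg hm]
    have hm' : m ≠ 0 := fun h => hm h.symm
    obtain ⟨i, hi⟩ : ∃ i, m i ≠ 0 := by
      by_contra hc
      push_neg at hc
      exact hm' (Finsupp.ext hc)
    have hle : Finsupp.single i 1 ≤ m := Finsupp.single_le_iff.mpr (Nat.one_le_iff_ne_zero.mpr hi)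
    set m' : Fin 2 →₀ ℕ := m - Finsupp.single i 1 with hm'def
    have key := coeff_pderiv i f m'
    have hz : pderiv i f = 0 := by fin_cases i <;> assumption
    rw [hz, coeff_zero, hm'def, tsub_add_cancel_of_le hle] at key
    have hne : ((m' i : ℂ) + 1) ≠ 0 := by
      exact_mod_cast Nat.cast_add_one_ne_zero (R := ℂ) (m' i)
    exact (mul_eq_zero.mp key.symm).resolve_left hne

lemma pderiv_eq_zero_of_degreeOf_eq_zero (i : Fin 2) (f : P2) (h : degreeOf i f = 0) :
    pderiv i f = 0 := by
  ext m
  rw [coeff_pderiv, coeff_zero]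
  have : coeff (m + Finsupp.single i 1) f = 0 := by
    by_contra hc
    have hmem := (mem_support_iff (p := f)).mpr hc
    have := monomial_le_degreeOf i hmem
    rw [h] at this
    simp [Finsupp.add_apply, Finsupp.single_eq_same] at this
  rw [this, mul_zero]

lemma degreeOf_pderiv_lt {i : Fin 2} {f : P2} (h : pderiv i f ≠ 0) :
    degreeOf i (pderiv i f) < degreeOf i f := by
  have hd : 0 < degreeOf i f := by
    rcases Nat.eq_zero_or_pos (degreeOf i f) with h0 | h0
    · exact absurd (pderiv_eq_zero_of_degreeOf_eq_zero i f h0) h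
    · exact h0
  rw [degreeOf_lt_iff hd]
  intro m hm
  have hc : coeff (m + Finsupp.single i 1) f ≠ 0 := by
    intro hc
    have := coeff_pderiv i f m
    rw [hc, mul_zero] at this
    exact (mem_support_iff.mp hm) this
  have := monomial_le_degreeOf i (mem_support_iff.mpr hc)
  simp only [Finsupp.add_apply, Finsupp.single_eq_same] at this
  omega

lemma degreeOf_le_of_dvd_zero {f g : MvPolynomial (Fin 2) ℂ} (h : f ∣ g) (hg : g ≠ 0) :
    degreeOf 0 f ≤ degreeOf 0 g := by
  have h' : (finSuccEquiv ℂ 1) f ∣ (finSuccEquiv ℂ 1) g := map_dvd _ h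
  have hg' : (finSuccEquiv ℂ 1) g ≠ 0 := by
    intro hc
    exact hg ((map_eq_zero_iff _ (finSuccEquiv ℂ 1).injective).mp hc)
  have := Polynomial.natDegree_le_of_dvd h' hg'
  rwa [natDegree_finSuccEquiv, natDegree_finSuccEquiv] at this

lemma degreeOf_le_of_dvd (i : Fin 2) {f g : P2} (h : f ∣ g) (hg : g ≠ 0) :
    degreeOf i f ≤ degreeOf i g := by
  set sw : Fin 2 ≃ Fin 2 := Equiv.swap i 0 with hsw
  have hdvd : rename sw f ∣ rename sw g := map_dvd _ h
  have hgn : rename sw g ≠ 0 := by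
    intro hc
    apply hg
    have := MvPolynomial.rename_injective (R := ℂ) sw sw.injective
    apply this
    rw [hc, map_zero]
  have h0 := degreeOf_le_of_dvd_zero hdvd hgn
  have ef : degreeOf 0 (rename (⇑sw) f) = degreeOf i f := by
    have := degreeOf_rename_of_injective (p := f) sw.injective i
    rwa [Equiv.swap_apply_left] at this
  have eg : degreeOf 0 (rename (⇑sw) g) = degreeOf i g := by
    have := degreeOf_rename_of_injective (p := g) sw.injective i
    rwa [Equiv.swap_apply_left] at this
  rw [ef, eg] at h0
  exact h0

lemma pderiv_eq_zero_of_dvd_pderiv {i : Fin 2} {f : P2} (h : f ∣ pderiv i f) :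
    pderiv i f = 0 := by
  by_contra hne
  have h1 := degreeOf_le_of_dvd i h hne
  have h2 := degreeOf_pderiv_lt hne
  omega

lemma not_prime_of_pderiv_eq_zero {f : P2} (h0 : pderiv 0 f = 0) (h1 : pderiv 1 f = 0) :
    ¬ Prime f := by
  intro hf
  have hC := eq_C_of_pderiv_eq_zero h0 h1
  have hc : coeff 0 f ≠ 0 := by
    intro hc
    rw [hc, map_zero] at hC
    exact hf.ne_zero hC
  exact hf.not_unit (hC ▸ (isUnit_iff_ne_zero.mpr hc).map C)

lemma eq_C_of_isUnit {f : P2} (h : IsUnit f) : ∃ c : ℂ, c ≠ 0 ∧ f = C c := by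
  have h2 : IsUnit (finSuccEquiv ℂ 1 f) := h.map _
  have hd2 : (finSuccEquiv ℂ 1 f).natDegree = 0 := Polynomial.natDegree_eq_zero_of_isUnit h2
  have hF : finSuccEquiv ℂ 1 f = Polynomial.C ((finSuccEquiv ℂ 1 f).coeff 0) :=
    Polynomial.eq_C_of_natDegree_eq_zero hd2
  set g : MvPolynomial (Fin 1) ℂ := (finSuccEquiv ℂ 1 f).coeff 0 with hgdef
  have hg : IsUnit g := by
    rw [hF] at h2
    exact Polynomial.isUnit_C.mp h2
  have h1 : IsUnit (finSuccEquiv ℂ 0 g) := hg.map _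
  have hd1 : (finSuccEquiv ℂ 0 g).natDegree = 0 := Polynomial.natDegree_eq_zero_of_isUnit h1
  have hG : finSuccEquiv ℂ 0 g = Polynomial.C ((finSuccEquiv ℂ 0 g).coeff 0) :=
    Polynomial.eq_C_of_natDegree_eq_zero hd1
  obtain ⟨c, hc⟩ : ∃ c : ℂ, (finSuccEquiv ℂ 0 g).coeff 0 = C c :=
    ⟨_, MvPolynomial.eq_C_of_isEmpty _⟩
  have hgC : g = C c := by
    have := congrArg (finSuccEquiv ℂ 0).symm hG
    rw [(finSuccEquiv ℂ 0).symm_apply_apply, hc] at this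
    rw [this]
    have := congrFun (congrArg (fun φ => φ.toFun) (finSuccEquiv_comp_C_eq_C (R := ℂ) 0)) c
    simpa using this
  have hfC : f = C c := by
    have := congrArg (finSuccEquiv ℂ 1).symm hF
    rw [(finSuccEquiv ℂ 1).symm_apply_apply, hgC] at this
    rw [this]
    have := congrFun (congrArg (fun φ => φ.toFun) (finSuccEquiv_comp_C_eq_C (R := ℂ) 1)) c
    simpa using this
  refine ⟨c, ?_, hfC⟩
  intro hc0
  rw [hc0, map_zero] at hfC
  exact h.ne_zero hfC

lemma f_mul_pderiv_pow_mul (i : Fin 2) (f u : P2) (a : ℕ) :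
    f * pderiv i (f ^ a * u)
      = f ^ a * ((a : P2) * (pderiv i f * u) + f * pderiv i u) := by
  rw [pderiv_mul]
  cases a with
  | zero => simp
  | succ k =>
    rw [pderiv_pow, Nat.add_sub_cancel]
    push_cast
    ring

lemma X_mul_pderiv_monomial (i : Fin 2) (d : Fin 2 →₀ ℕ) (c : ℂ) :
    X i * pderiv i (monomial d c) = monomial d (c * (d i : ℂ)) := by
  rw [pderiv_monomial]
  by_cases h : d i = 0
  · simp [h]
  · have hle : Finsupp.single i 1 ≤ d := Finsupp.single_le_iff.mpr (Nat.one_le_iff_ne_zero.mpr h)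
    rw [X, monomial_mul, one_mul, add_comm, tsub_add_cancel_of_le hle]

lemma euler (W A B : ℝ) (p : P2) (hp : ∀ d ∈ p.support, A * d 0 + B * d 1 = W) :
    C (A:ℂ) * (X 0 * pderiv 0 p) + C (B:ℂ) * (X 1 * pderiv 1 p) = C (W:ℂ) * p := by
  conv_lhs => rw [p.as_sum]
  conv_rhs => rw [p.as_sum]
  rw [map_sum (pderiv 0), map_sum (pderiv 1)]
  simp only [Finset.mul_sum]
  rw [← Finset.sum_add_distrib]
  apply Finset.sum_congr rfl
  intro d hd
  rw [X_mul_pderiv_monomial, X_mul_pderiv_monomial, C_mul_monomial, C_mul_monomial,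
    C_mul_monomial, ← map_add]
  congr 1
  have h := congrArg (fun x : ℝ => (x : ℂ)) (hp d hd)
  push_cast at h ⊢
  linear_combination (coeff d p) * h
lemma key {c1 c2 : ℂ} {P Q f : P2} (hP : P ≠ 0) (hQ : Q ≠ 0) (hf : Prime f)
    (hx : C c1 * (P * pderiv 0 Q) = C c2 * (Q * pderiv 0 P))
    (hy : C c1 * (P * pderiv 1 Q) = C c2 * (Q * pderiv 1 P)) :
    c1 * (multiplicity f Q : ℂ) = c2 * (multiplicity f P : ℂ) := by
  have finP := FiniteMultiplicity.of_prime_left hf hP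
  have finQ := FiniteMultiplicity.of_prime_left hf hQ
  set a := multiplicity f P with hadef
  set b := multiplicity f Q with hbdef
  obtain ⟨u, hPu, hu⟩ := finP.exists_eq_pow_mul_and_not_dvd
  obtain ⟨v, hQv, hv⟩ := finQ.exists_eq_pow_mul_and_not_dvd
  rw [← hadef] at hPu
  rw [← hbdef] at hQv
  have Ex : C c1 * (u * ((b : P2) * (pderiv 0 f * v) + f * pderiv 0 v))
      = C c2 * (v * ((a : P2) * (pderiv 0 f * u) + f * pderiv 0 u)) := by
    apply mul_left_cancel₀ (pow_ne_zero (a + b + 1) hf.ne_zero)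
    have h1 := f_mul_pderiv_pow_mul 0 f u a
    have h2 := f_mul_pderiv_pow_mul 0 f v b
    rw [hPu, hQv] at hx
    linear_combination (f * f) * hx - (C c1 * (f ^ a * u) * f) * h2
      + (C c2 * (f ^ b * v) * f) * h1
  have Ey : C c1 * (u * ((b : P2) * (pderiv 1 f * v) + f * pderiv 1 v))
      = C c2 * (v * ((a : P2) * (pderiv 1 f * u) + f * pderiv 1 u)) := by
    apply mul_left_cancel₀ (pow_ne_zero (a + b + 1) hf.ne_zero)
    have h1 := f_mul_pderiv_pow_mul 1 f u a
    have h2 := f_mul_pderiv_pow_mul 1 f v b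
    rw [hPu, hQv] at hy
    linear_combination (f * f) * hy - (C c1 * (f ^ a * u) * f) * h2
      + (C c2 * (f ^ b * v) * f) * h1
  have hdx : f ∣ C (c1 * b - c2 * a) * (pderiv 0 f * (u * v)) := by
    refine ⟨C c2 * (v * pderiv 0 u) - C c1 * (u * pderiv 0 v), ?_⟩
    simp only [map_sub, map_mul, map_natCast]
    linear_combination Ex
  have hdy : f ∣ C (c1 * b - c2 * a) * (pderiv 1 f * (u * v)) := by
    refine ⟨C c2 * (v * pderiv 1 u) - C c1 * (u * pderiv 1 v), ?_⟩
    simp only [map_sub, map_mul, map_natCast]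
    linear_combination Ey
  by_contra hne
  have hd0 : c1 * b - c2 * a ≠ 0 := sub_ne_zero.mpr hne
  have cancel : ∀ w : P2, f ∣ C (c1 * b - c2 * a) * w → f ∣ w := by
    intro w hw
    have : w = C (c1 * b - c2 * a)⁻¹ * (C (c1 * b - c2 * a) * w) := by
      rw [← mul_assoc, ← map_mul, inv_mul_cancel₀ hd0, map_one, one_mul]
    rw [this]
    exact hw.mul_left _
  have hdx' : f ∣ pderiv 0 f * (u * v) := cancel _ hdx
  have hdy' : f ∣ pderiv 1 f * (u * v) := cancel _ hdy
  have hfx : pderiv 0 f = 0 := by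
    rcases hf.dvd_mul.mp hdx' with h | h
    · exact pderiv_eq_zero_of_dvd_pderiv h
    · rcases hf.dvd_mul.mp h with h' | h'
      · exact absurd h' hu
      · exact absurd h' hv
  have hfy : pderiv 1 f = 0 := by
    rcases hf.dvd_mul.mp hdy' with h | h
    · exact pderiv_eq_zero_of_dvd_pderiv h
    · rcases hf.dvd_mul.mp h with h' | h'
      · exact absurd h' hu
      · exact absurd h' hv
  exact not_prime_of_pderiv_eq_zero hfx hfy hf
lemma associated_of_multiplicity_eq {A B : P2} (hA : A ≠ 0) (hB : B ≠ 0)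
    (h : ∀ f : P2, Prime f → multiplicity f A = multiplicity f B) : Associated A B := by
  classical
  letI : NormalizationMonoid P2 := UniqueFactorizationMonoid.normalizationMonoid.toNormalizationMonoid
  rw [UniqueFactorizationMonoid.associated_iff_normalizedFactors_eq_normalizedFactors hA hB]
  ext g
  by_cases hgi : Irreducible g
  · by_cases hgn : normalize g = g
    · have hgp : Prime g := UniqueFactorizationMonoid.irreducible_iff_prime.mp hgi
      have finA := FiniteMultiplicity.of_prime_left hgp hA
      have finB := FiniteMultiplicity.of_prime_left hgp hB
      have e1 := UniqueFactorizationMonoid.emultiplicity_eq_count_normalizedFactors hgi hA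
      have e2 := UniqueFactorizationMonoid.emultiplicity_eq_count_normalizedFactors hgi hB
      rw [finA.emultiplicity_eq_multiplicity, hgn] at e1
      rw [finB.emultiplicity_eq_multiplicity, hgn] at e2
      have hmm : ((Multiset.count g (UniqueFactorizationMonoid.normalizedFactors A)) : ℕ∞)
          = (Multiset.count g (UniqueFactorizationMonoid.normalizedFactors B) : ℕ∞) := by
        rw [← e1, ← e2, h g hgp]
      exact_mod_cast hmm
    · rw [Multiset.count_eq_zero_of_notMem
          (fun hmem => hgn (UniqueFactorizationMonoid.normalize_normalized_factor _ hmem)),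
        Multiset.count_eq_zero_of_notMem
          (fun hmem => hgn (UniqueFactorizationMonoid.normalize_normalized_factor _ hmem))]
  · rw [Multiset.count_eq_zero_of_notMem
        (fun hmem => hgi (UniqueFactorizationMonoid.irreducible_of_normalized_factor _ hmem)),
      Multiset.count_eq_zero_of_notMem
        (fun hmem => hgi (UniqueFactorizationMonoid.irreducible_of_normalized_factor _ hmem))]
end

end HomJacAux

/-- Let `w` be a weight degree function on `ℂ[x,y]` with `w(x) = α`, `w(y) = β`.
Let `p, q ∈ ℂ[x,y]` be nonzero `w`-homogeneous polynomials (of weights `Wp`, `Wq`)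
with `deg_w(p) = Wp ≠ 0` and `J(p,q) = 0`.  Then `q` is proportional to a rational
power of `p`: there exist an integer `s ≥ 1`, an integer `t ≥ 0` and a constant
`c ∈ ℂ*` such that `q^s = c·p^t`. -/
theorem homogeneous_jacobian_dependent (α β Wp Wq : ℝ)
    (p q : MvPolynomial (Fin 2) ℂ) (hp0 : p ≠ 0) (hq0 : q ≠ 0)
    (hp : ∀ d ∈ p.support, α * d 0 + β * d 1 = Wp)
    (hq : ∀ d ∈ q.support, α * d 0 + β * d 1 = Wq)
    (hWp : Wp ≠ 0)
    (hJ : pderiv (0 : Fin 2) p * pderiv (1 : Fin 2) q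
        - pderiv (1 : Fin 2) p * pderiv (0 : Fin 2) q = 0) :
    ∃ (s t : ℕ) (c : ℂ), 1 ≤ s ∧ c ≠ 0 ∧ q ^ s = C c * p ^ t := by
  classical
  have eulerp := HomJacAux.euler Wp α β p hp
  have eulerq := HomJacAux.euler Wq α β q hq
  have hWpC : (Wp : ℂ) ≠ 0 := Complex.ofReal_ne_zero.mpr hWp
  have step2x : C (Wp:ℂ) * (p * pderiv 0 q) = C (Wq:ℂ) * (q * pderiv 0 p) := by
    linear_combination (-(pderiv 0 q)) * eulerp + (pderiv 0 p) * eulerq - (C (β:ℂ) * X 1) * hJ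
  have step2y : C (Wp:ℂ) * (p * pderiv 1 q) = C (Wq:ℂ) * (q * pderiv 1 p) := by
    linear_combination (-(pderiv 1 q)) * eulerp + (pderiv 1 p) * eulerq + (C (α:ℂ) * X 0) * hJ
  have hCne : (C (Wp:ℂ) : MvPolynomial (Fin 2) ℂ) ≠ 0 := fun hc => hWpC (by simpa using hc)
  by_cases hWq : Wq = 0
  · have hqx : pderiv 0 q = 0 := by
      have h1 : C (Wp:ℂ) * (p * pderiv 0 q) = 0 := by rw [step2x, hWq]; simp
      rcases mul_eq_zero.mp h1 with h | h
      · exact absurd h hCne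
      · rcases mul_eq_zero.mp h with h | h
        · exact absurd h hp0
        · exact h
    have hqy : pderiv 1 q = 0 := by
      have h1 : C (Wp:ℂ) * (p * pderiv 1 q) = 0 := by rw [step2y, hWq]; simp
      rcases mul_eq_zero.mp h1 with h | h
      · exact absurd h hCne
      · rcases mul_eq_zero.mp h with h | h
        · exact absurd h hp0
        · exact h
    have hCq := HomJacAux.eq_C_of_pderiv_eq_zero hqx hqy
    have hc0 : coeff 0 q ≠ 0 := fun h => hq0 (by rw [hCq, h, map_zero])
    exact ⟨1, 0, coeff 0 q, le_rfl, hc0, by rw [pow_one, pow_zero, mul_one]; exact hCq⟩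
  · have hqnu : ¬ IsUnit q := by
      intro hu
      obtain ⟨c, hc0, hcq⟩ := HomJacAux.eq_C_of_isUnit hu
      apply hWq
      have h0 : (0 : Fin 2 →₀ ℕ) ∈ q.support := mem_support_iff.mpr (by rw [hcq]; simpa using hc0)
      have := hq 0 h0
      simpa using this.symm
    obtain ⟨f0, hf0irr, hf0dvd⟩ := WfDvdMonoid.exists_irreducible_factor hqnu hq0
    have hf0 : Prime f0 := UniqueFactorizationMonoid.irreducible_iff_prime.mp hf0irr
    set s := multiplicity f0 p with hsdef
    set t := multiplicity f0 q with htdef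
    have hkey0 := HomJacAux.key hp0 hq0 hf0 step2x step2y
    rw [← hsdef, ← htdef] at hkey0
    have ht1 : 1 ≤ t := multiplicity_pos_of_dvd hf0dvd
    have hs1 : 1 ≤ s := by
      by_contra hcon
      push_neg at hcon
      have hs0 : s = 0 := by omega
      rw [hs0] at hkey0
      have h2 : (t : ℂ) = 0 := by
        have h3 : (Wp:ℂ) * (t:ℂ) = 0 := by rw [hkey0]; norm_num
        rcases mul_eq_zero.mp h3 with h | h
        · exact absurd h hWpC
        · exact h
      have h4 : t = 0 := by exact_mod_cast h2
      omega
    have hall : ∀ f : MvPolynomial (Fin 2) ℂ, Prime f →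
        s * multiplicity f q = t * multiplicity f p := by
      intro f hf
      have hk := HomJacAux.key hp0 hq0 hf step2x step2y
      have hcast : ((s * multiplicity f q : ℕ) : ℂ) = ((t * multiplicity f p : ℕ) : ℂ) := by
        push_cast
        have h1 : (Wp:ℂ) * ((s:ℂ) * (multiplicity f q : ℂ))
            = (Wp:ℂ) * ((t:ℂ) * (multiplicity f p : ℂ)) := by
          linear_combination (s:ℂ) * hk - (multiplicity f p : ℂ) * hkey0
        exact mul_left_cancel₀ hWpC h1
      exact_mod_cast hcast
    have hassoc : Associated (q ^ s) (p ^ t) := by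
      apply HomJacAux.associated_of_multiplicity_eq (pow_ne_zero _ hq0) (pow_ne_zero _ hp0)
      intro f hf
      have finp := FiniteMultiplicity.of_prime_left hf hp0
      have finq := FiniteMultiplicity.of_prime_left hf hq0
      rw [finq.multiplicity_pow hf, finp.multiplicity_pow hf]
      exact hall f hf
    obtain ⟨w, hw⟩ := hassoc
    obtain ⟨c, hc0, hcw⟩ := HomJacAux.eq_C_of_isUnit w.isUnit
    refine ⟨s, t, c⁻¹, hs1, inv_ne_zero hc0, ?_⟩
    rw [← hw, hcw, show (C c⁻¹ : MvPolynomial (Fin 2) ℂ) * (q ^ s * C c)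
        = (C c⁻¹ * C c) * q ^ s by ring, ← map_mul, inv_mul_cancel₀ hc0, map_one, one_mul]
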